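/- For fixed d ∈ ℕ, the function k_d(i,j) = C_hv^{i+j−2−2d} · C_d^d · (i+j−2−d)! / ((i−1−d)! (j−1−d)!) defined for integers i, j > d is a positive semidefinite kernel on { n ∈ ℕ : n > d }, for any C_hv ∈ ℝ and C_d ≥ 0. -/

import Mathlib

open MeasureTheory Set

lemma exp_pow_integrable (m : ℕ) :
    IntegrableOn (fun x : ℝ => Real.exp (-x) * x ^ m) (Ioi 0) := by
  have h := Real.GammaIntegral_convergent (s := (m + 1 : ℝ)) (by positivity)
  refine h.congr_fun (fun x hx => ?_) measurableSet_Ioi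
  simp only [add_sub_cancel_right, Real.rpow_natCast]

lemma integral_exp_pow (m : ℕ) :
    ∫ x in Ioi (0:ℝ), Real.exp (-x) * x ^ m = (Nat.factorial m : ℝ) := by
  have h1 : Real.Gamma (m + 1 : ℝ) = ∫ x in Ioi (0:ℝ), Real.exp (-x) * x ^ ((m:ℝ) + 1 - 1) :=
    Real.Gamma_eq_integral (by positivity)
  have h2 : Real.Gamma ((m : ℝ) + 1) = Nat.factorial m := by
    exact_mod_cast Real.Gamma_nat_eq_factorial m
  rw [← h2, h1]
  refine setIntegral_congr_fun measurableSet_Ioi fun x hx => ?_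
  rw [add_sub_cancel_right, Real.rpow_natCast]

lemma gram_nonneg (n : ℕ) (a : Fin n → ℕ) (b : Fin n → ℝ) (d : ℕ) :
    0 ≤ ∑ i : Fin n, ∑ j : Fin n,
      b i * b j * ((Nat.factorial (a i + a j + d) : ℝ) /
        ((Nat.factorial (a i) : ℝ) * (Nat.factorial (a j) : ℝ))) := by
  have key : ∑ i : Fin n, ∑ j : Fin n,
      b i * b j * ((Nat.factorial (a i + a j + d) : ℝ) /
        ((Nat.factorial (a i) : ℝ) * (Nat.factorial (a j) : ℝ)))
      = ∫ x in Ioi (0:ℝ),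
        (∑ i : Fin n, b i / (Nat.factorial (a i) : ℝ) * x ^ (a i))^2
          * (x ^ d * Real.exp (-x)) := by
    have hint : ∀ (i j : Fin n), IntegrableOn
        (fun x : ℝ => b i / (Nat.factorial (a i) : ℝ) * x ^ (a i) *
          (b j / (Nat.factorial (a j) : ℝ) * x ^ (a j)) * (x ^ d * Real.exp (-x)))
        (Ioi 0) := by
      intro i j
      have := ((exp_pow_integrable (a i + a j + d)).const_mul
        (b i / (Nat.factorial (a i) : ℝ) * (b j / (Nat.factorial (a j) : ℝ))))
      refine (IntegrableOn.congr_fun this (fun x hx => ?_) measurableSet_Ioi)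
      ring
    have expand : ∀ x : ℝ,
        (∑ i : Fin n, b i / (Nat.factorial (a i) : ℝ) * x ^ (a i))^2
          * (x ^ d * Real.exp (-x))
        = ∑ i : Fin n, ∑ j : Fin n,
          b i / (Nat.factorial (a i) : ℝ) * x ^ (a i) *
            (b j / (Nat.factorial (a j) : ℝ) * x ^ (a j)) * (x ^ d * Real.exp (-x)) := by
      intro x
      rw [sq, Finset.sum_mul_sum, Finset.sum_mul]
      congr 1; ext i
      rw [Finset.sum_mul]
    simp_rw [expand]
    rw [integral_finset_sum _ (fun i _ => integrable_finset_sum _ (fun j _ => hint i j))]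
    refine Finset.sum_congr rfl fun i _ => ?_
    rw [integral_finset_sum _ (fun j _ => hint i j)]
    refine Finset.sum_congr rfl fun j _ => ?_
    have : ∀ x : ℝ, b i / (Nat.factorial (a i) : ℝ) * x ^ (a i) *
        (b j / (Nat.factorial (a j) : ℝ) * x ^ (a j)) * (x ^ d * Real.exp (-x))
        = (b i / (Nat.factorial (a i) : ℝ) * (b j / (Nat.factorial (a j) : ℝ)))
          * (Real.exp (-x) * x ^ (a i + a j + d)) := by
      intro x; rw [pow_add, pow_add]; ring
    simp_rw [this]
    rw [MeasureTheory.integral_const_mul, integral_exp_pow]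
    field_simp
  rw [key]
  refine setIntegral_nonneg measurableSet_Ioi fun x hx => ?_
  have : (0:ℝ) < x := hx
  positivity

def IsPSDKernel {X : Type*} (k : X → X → ℝ) : Prop :=
  ∀ (n : ℕ) (x : Fin n → X) (c : Fin n → ℝ),
    0 ≤ ∑ i : Fin n, ∑ j : Fin n, c i * c j * k (x i) (x j)

/-- The summand `k_d` of the structure kernel `k_Γ` is positive semidefinite
on `{n ∈ ℕ : n > d}`, for any `C_hv ∈ ℝ` and `C_d ≥ 0`. -/
theorem kd_is_psd (d : ℕ) (Chv Cd : ℝ) (hCd : 0 ≤ Cd) :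
    IsPSDKernel (fun (i j : {n : ℕ // d < n}) =>
      Chv ^ ((i : ℕ) + (j : ℕ) - 2 - 2 * d) * Cd ^ d *
        ((Nat.factorial ((i : ℕ) + (j : ℕ) - 2 - d) : ℝ) /
          ((Nat.factorial ((i : ℕ) - 1 - d) : ℝ) *
            (Nat.factorial ((j : ℕ) - 1 - d) : ℝ)))) := by
  intro n x c
  set a : Fin n → ℕ := fun i => (x i : ℕ) - 1 - d with ha
  set b : Fin n → ℝ := fun i => c i * Chv ^ (a i) with hb
  have key : ∀ i j : Fin n,
      c i * c j * (Chv ^ ((x i : ℕ) + (x j : ℕ) - 2 - 2 * d) * Cd ^ d *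
        ((Nat.factorial ((x i : ℕ) + (x j : ℕ) - 2 - d) : ℝ) /
          ((Nat.factorial ((x i : ℕ) - 1 - d) : ℝ) *
            (Nat.factorial ((x j : ℕ) - 1 - d) : ℝ))))
      = Cd ^ d * (b i * b j * ((Nat.factorial (a i + a j + d) : ℝ) /
          ((Nat.factorial (a i) : ℝ) * (Nat.factorial (a j) : ℝ)))) := by
    intro i j
    have hi := (x i).2
    have hj := (x j).2
    have e1 : (x i : ℕ) + (x j : ℕ) - 2 - 2 * d = a i + a j := by simp only [ha]; omega
    have e2 : (x i : ℕ) + (x j : ℕ) - 2 - d = a i + a j + d := by simp only [ha]; omega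
    rw [e1, e2, pow_add]
    simp only [hb, ha]
    ring
  simp only [key, ← Finset.mul_sum]
  exact mul_nonneg (pow_nonneg hCd d) (gram_nonneg n a b d)
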